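/- Let a < b be real numbers, let K ≥ 0, and let p : ℝ → ℝ be integrable on (a, b) with respect to Lebesgue measure. Suppose that |∫_a^b p(t) v′(t) dt| ≤ K · sup_{t ∈ [a,b]} |v(t)| for every continuously differentiable function v : ℝ → ℝ. Then there exists a function q : ℝ → ℝ whose total variation over [a, b] is at most K and which satisfies q(t) = p(t) for Lebesgue-almost every t ∈ (a, b). -/

import Mathlib

open Set Filter Topology MeasureTheory intervalIntegral Metric
open scoped ENNReal NNReal


lemma expNegInvGlue_monotone : Monotone expNegInvGlue := by
  intro x y hxy
  rcases le_or_gt y 0 with hy | hy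
  · rw [expNegInvGlue.zero_of_nonpos (hxy.trans hy), expNegInvGlue.zero_of_nonpos hy]
  rcases le_or_gt x 0 with hx | hx
  · rw [expNegInvGlue.zero_of_nonpos hx]; exact expNegInvGlue.nonneg y
  · unfold expNegInvGlue
    rw [if_neg hx.not_ge, if_neg hy.not_ge]
    exact Real.exp_le_exp.2 (neg_le_neg (inv_anti₀ hx hxy))

lemma smoothTransition_monotone : Monotone Real.smoothTransition := by
  intro x y hxy
  unfold Real.smoothTransition
  rw [div_le_div_iff₀ (Real.smoothTransition.pos_denom x) (Real.smoothTransition.pos_denom y)]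
  have h1 : expNegInvGlue x ≤ expNegInvGlue y := expNegInvGlue_monotone hxy
  have h2 : expNegInvGlue (1 - y) ≤ expNegInvGlue (1 - x) :=
    expNegInvGlue_monotone (by linarith)
  nlinarith [expNegInvGlue.nonneg x, expNegInvGlue.nonneg y,
    expNegInvGlue.nonneg (1 - x), expNegInvGlue.nonneg (1 - y)]

noncomputable def eta : ℝ → ℝ := deriv Real.smoothTransition

lemma T_contDiff : ContDiff ℝ 1 Real.smoothTransition := Real.smoothTransition.contDiff

lemma T_hasDerivAt (x : ℝ) : HasDerivAt Real.smoothTransition (eta x) x :=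
  ((T_contDiff.differentiable one_ne_zero) x).hasDerivAt

lemma eta_cont : Continuous eta := by
  have := T_contDiff
  rw [contDiff_one_iff_deriv] at this
  exact this.2

lemma eta_zero_of_nonpos {x : ℝ} (hx : x ≤ 0) : eta x = 0 := by
  rcases lt_or_eq_of_le hx with hx' | rfl
  · have h : Real.smoothTransition =ᶠ[𝓝 x] fun _ => 0 := by
      filter_upwards [gt_mem_nhds hx'] with y hy
      exact Real.smoothTransition.zero_of_nonpos hy.le
    rw [eta, h.deriv_eq, deriv_const]
  · refine IsLocalMin.deriv_eq_zero ?_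
    apply Filter.Eventually.of_forall
    intro y
    rw [Real.smoothTransition.zero]
    exact Real.smoothTransition.nonneg y

lemma eta_zero_of_one_le {x : ℝ} (hx : 1 ≤ x) : eta x = 0 := by
  rcases lt_or_eq_of_le hx with hx' | rfl
  · have h : Real.smoothTransition =ᶠ[𝓝 x] fun _ => 1 := by
      filter_upwards [lt_mem_nhds hx'] with y hy
      exact Real.smoothTransition.one_of_one_le hy.le
    rw [eta, h.deriv_eq, deriv_const]
  · refine IsLocalMax.deriv_eq_zero ?_
    apply Filter.Eventually.of_forall
    intro y
    rw [Real.smoothTransition.one]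
    exact Real.smoothTransition.le_one y

lemma eta_support : ∀ x, x ∉ Icc (0:ℝ) 1 → eta x = 0 := by
  intro x hx
  rcases not_and_or.1 hx with h | h
  · exact eta_zero_of_nonpos (not_le.1 h).le
  · exact eta_zero_of_one_le (not_le.1 h).le

lemma eta_hasCompactSupport : HasCompactSupport eta :=
  HasCompactSupport.intro isCompact_Icc eta_support

lemma eta_bound : ∃ C : ℝ, 0 < C ∧ ∀ x, |eta x| ≤ C := by
  obtain ⟨C, hC⟩ := (eta_cont.abs).bounded_above_of_compact_support
    (eta_hasCompactSupport.abs)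
  refine ⟨max C 1, lt_of_lt_of_le one_pos (le_max_right _ _), fun x => ?_⟩
  have := hC x
  rw [Real.norm_eq_abs, abs_abs] at this
  exact this.trans (le_max_left _ _)

lemma eta_integrable : MeasureTheory.Integrable eta := by
  exact eta_cont.integrable_of_hasCompactSupport eta_hasCompactSupport

lemma eta_integral : ∫ x, eta x = 1 := by
  have h1 : ∫ x in (0:ℝ)..1, eta x = 1 := by
    have := intervalIntegral.integral_deriv_eq_sub
      (f := Real.smoothTransition) (a := (0:ℝ)) (b := 1)
      (fun x _ => ((T_contDiff.differentiable one_ne_zero) x))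
      (eta_cont.intervalIntegrable 0 1)
    rw [Real.smoothTransition.one, Real.smoothTransition.zero, sub_zero] at this
    exact this
  rw [← h1, intervalIntegral.integral_of_le zero_le_one]
  symm
  apply MeasureTheory.setIntegral_eq_integral_of_forall_compl_eq_zero
  intro x hx
  rcases le_or_gt x 0 with h0 | h0
  · exact eta_zero_of_nonpos h0
  apply eta_support
  intro hmem
  exact hx ⟨h0, hmem.2⟩

noncomputable def moll (h x t : ℝ) : ℝ := eta ((t - x) / h) * h⁻¹

lemma moll_cont (h x : ℝ) : Continuous (moll h x) := by
  exact ((eta_cont.comp (by continuity)).mul continuous_const)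

lemma moll_support {h x : ℝ} (hh : 0 < h) : ∀ t, t ∉ Icc x (x + h) → moll h x t = 0 := by
  intro t ht
  rw [moll, eta_support, zero_mul]
  intro ⟨h1, h2⟩
  apply ht
  constructor
  · have := (div_nonneg_iff.1 h1)
    rcases this with ⟨h3, _⟩ | ⟨_, h4⟩
    · linarith
    · linarith
  · nlinarith [(div_le_one hh).1 h2]

lemma moll_hasCompactSupport {h x : ℝ} (hh : 0 < h) : HasCompactSupport (moll h x) :=
  HasCompactSupport.intro isCompact_Icc (moll_support hh)

lemma moll_integrable {h x : ℝ} (hh : 0 < h) : Integrable (moll h x) :=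
  (moll_cont h x).integrable_of_hasCompactSupport (moll_hasCompactSupport hh)

lemma moll_integral {h x : ℝ} (hh : 0 < h) : ∫ t, moll h x t = 1 := by
  have h1 : ∫ t, eta ((t - x) / h) = ∫ t, eta (t / h) :=
    integral_sub_right_eq_self (fun t => eta (t / h)) x
  have h2 : ∫ t, eta (t / h) = |h| • ∫ t, eta t :=
    MeasureTheory.Measure.integral_comp_div eta h
  simp only [moll]
  rw [MeasureTheory.integral_mul_const, h1, h2, eta_integral, smul_eq_mul, mul_one,
    abs_of_pos hh, mul_inv_cancel₀ hh.ne']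


noncomputable def qmoll (g : ℝ → ℝ) (h x : ℝ) : ℝ := ∫ t, g t * moll h x t

lemma moll_bound {h : ℝ} (hh : 0 < h) : ∃ C : ℝ, 0 < C ∧ ∀ x t, |moll h x t| ≤ C := by
  obtain ⟨C, hC, hC2⟩ := eta_bound
  refine ⟨C * h⁻¹, by positivity, fun x t => ?_⟩
  rw [moll, abs_mul, abs_of_pos (inv_pos.2 hh)]
  exact mul_le_mul_of_nonneg_right (hC2 _) (inv_pos.2 hh).le

lemma integrable_mul_moll {g : ℝ → ℝ} (hg : Integrable g) {h : ℝ} (hh : 0 < h) (x : ℝ) :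
    Integrable (fun t => g t * moll h x t) := by
  obtain ⟨C, _, hC2⟩ := moll_bound hh
  have := hg.bdd_mul (moll_cont h x).aestronglyMeasurable
    (c := C) (Filter.Eventually.of_forall fun t => by rw [Real.norm_eq_abs]; exact hC2 x t)
  exact this.congr (Filter.Eventually.of_forall fun t => mul_comm _ _)

lemma integrableOn_mul_moll {g : ℝ → ℝ} {s : Set ℝ} (hg : IntegrableOn g s)
    {h : ℝ} (hh : 0 < h) (x : ℝ) :
    IntegrableOn (fun t => g t * moll h x t) s := by
  obtain ⟨C, _, hC2⟩ := moll_bound hh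
  have := hg.bdd_mul (moll_cont h x).aestronglyMeasurable
    (c := C) (Filter.Eventually.of_forall fun t => by rw [Real.norm_eq_abs]; exact hC2 x t)
  exact this.congr (Filter.Eventually.of_forall fun t => mul_comm _ _)

lemma qmoll_eq {a b : ℝ} (hab : a ≤ b) (p : ℝ → ℝ) {h : ℝ} (hh : 0 < h) (x : ℝ) :
    (∫ t in a..b, p t * moll h x t) = qmoll ((Ioo a b).indicator p) h x := by
  rw [qmoll, intervalIntegral.integral_of_le hab, integral_Ioc_eq_integral_Ioo,
    ← MeasureTheory.integral_indicator measurableSet_Ioo]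
  congr 1
  funext t
  by_cases ht : t ∈ Ioo a b <;> simp [Set.indicator_of_mem, Set.indicator_of_notMem, ht]

lemma ramp_hasDerivAt {h : ℝ} (hh : 0 < h) (y t : ℝ) :
    HasDerivAt (fun s => Real.smoothTransition ((s - y) / h)) (moll h y t) t := by
  have h1 : HasDerivAt (fun s : ℝ => (s - y) / h) h⁻¹ t := by
    simpa using (((hasDerivAt_id t).sub_const y).div_const h)
  have h2 := (T_hasDerivAt ((t - y) / h)).comp t h1
  simpa [moll, Function.comp_def] using h2

lemma ramp_contDiff {h : ℝ} (hh : 0 < h) (y : ℝ) :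
    ContDiff ℝ 1 (fun s => Real.smoothTransition ((s - y) / h)) :=
  T_contDiff.comp ((contDiff_id.sub contDiff_const).div_const h)

theorem sum_bound (a b K : ℝ) (hab : a < b) (hK : 0 ≤ K) (p : ℝ → ℝ)
    (hp : IntegrableOn p (Ioo a b) (volume : Measure ℝ))
    (hbound : ∀ v : ℝ → ℝ, ContDiff ℝ 1 v →
      |∫ t in a..b, p t * deriv v t| ≤ K * sSup ((fun t => |v t|) '' Icc a b))
    {h : ℝ} (hh : 0 < h) (n : ℕ) (u : ℕ → ℝ) (hu : Monotone u) :
    ∑ i ∈ Finset.range n,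
      |qmoll ((Ioo a b).indicator p) h (u (i+1)) - qmoll ((Ioo a b).indicator p) h (u i)| ≤ K := by
  set P := (Ioo a b).indicator p with hP
  set ε : ℕ → ℝ := fun i => if 0 ≤ qmoll P h (u (i+1)) - qmoll P h (u i) then 1 else -1 with hε
  have hε1 : ∀ i, |ε i| = 1 := by
    intro i; rw [hε]; dsimp only; split <;> simp
  have hεΔ : ∀ i, ε i * (qmoll P h (u (i+1)) - qmoll P h (u i))
      = |qmoll P h (u (i+1)) - qmoll P h (u i)| := by
    intro i; rw [hε]; dsimp only; split
    · rw [one_mul, abs_of_nonneg (by assumption)]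
    · rw [neg_one_mul, abs_of_neg (lt_of_not_ge (by assumption))]
  set v : ℝ → ℝ := fun t => ∑ i ∈ Finset.range n,
    ε i * (Real.smoothTransition ((t - u (i+1)) / h) - Real.smoothTransition ((t - u i) / h))
    with hv
  -- v is C¹
  have hvC1 : ContDiff ℝ 1 v := by
    apply ContDiff.sum
    intro i _
    exact contDiff_const.mul ((ramp_contDiff hh _).sub (ramp_contDiff hh _))
  -- derivative of v
  have hv' : ∀ t, HasDerivAt v
      (∑ i ∈ Finset.range n, ε i * (moll h (u (i+1)) t - moll h (u i) t)) t := by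
    intro t
    apply HasDerivAt.fun_sum
    intro i _
    exact (((ramp_hasDerivAt hh (u (i+1)) t).sub (ramp_hasDerivAt hh (u i) t)).const_mul (ε i))
  -- |v| ≤ 1
  have hvb : ∀ t, |v t| ≤ 1 := by
    intro t
    calc |v t| ≤ ∑ i ∈ Finset.range n,
        |ε i * (Real.smoothTransition ((t - u (i+1)) / h)
          - Real.smoothTransition ((t - u i) / h))| := Finset.abs_sum_le_sum_abs _ _
      _ = ∑ i ∈ Finset.range n, (Real.smoothTransition ((t - u i) / h)
          - Real.smoothTransition ((t - u (i+1)) / h)) := by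
          apply Finset.sum_congr rfl
          intro i _
          rw [abs_mul, hε1, one_mul, abs_of_nonpos, neg_sub]
          rw [sub_nonpos]
          apply smoothTransition_monotone
          gcongr
          exact hu (Nat.le_succ i)
      _ = Real.smoothTransition ((t - u 0) / h)
          - Real.smoothTransition ((t - u n) / h) :=
          Finset.sum_range_sub' (fun i => Real.smoothTransition ((t - u i) / h)) n
      _ ≤ 1 := by
        have := Real.smoothTransition.le_one ((t - u 0) / h)
        have := Real.smoothTransition.nonneg ((t - u n) / h)
        linarith
  -- integrability
  have hpIoc : IntegrableOn p (Ioc a b) volume := (integrableOn_Ioc_iff_integrableOn_Ioo).2 hp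
  have hInt : ∀ y, IntervalIntegrable (fun t => p t * moll h y t) volume a b := by
    intro y
    rw [intervalIntegrable_iff_integrableOn_Ioc_of_le hab.le]
    obtain ⟨C, _, hC2⟩ := moll_bound hh
    have := hpIoc.bdd_mul (moll_cont h y).aestronglyMeasurable
      (c := C) (Filter.Eventually.of_forall fun t => by rw [Real.norm_eq_abs]; exact hC2 y t)
    exact this.congr (Filter.Eventually.of_forall fun t => mul_comm _ _)
  -- main computation
  have key : ∫ t in a..b, p t * deriv v t
      = ∑ i ∈ Finset.range n, ε i * (qmoll P h (u (i+1)) - qmoll P h (u i)) := by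
    have e1 : ∀ t, p t * deriv v t = ∑ i ∈ Finset.range n,
        (ε i * (p t * moll h (u (i+1)) t) - ε i * (p t * moll h (u i) t)) := by
      intro t
      rw [(hv' t).deriv, Finset.mul_sum]
      apply Finset.sum_congr rfl; intro i _; ring
    rw [intervalIntegral.integral_congr (fun t _ => e1 t),
      intervalIntegral.integral_finset_sum
        (fun i _ => (((hInt _).const_mul _).sub ((hInt _).const_mul _)))]
    apply Finset.sum_congr rfl
    intro i _
    rw [intervalIntegral.integral_sub ((hInt _).const_mul _) ((hInt _).const_mul _),
        intervalIntegral.integral_const_mul, intervalIntegral.integral_const_mul,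
        qmoll_eq hab.le p hh, qmoll_eq hab.le p hh]
    ring
  -- sSup bound
  have hsup : sSup ((fun t => |v t|) '' Icc a b) ≤ 1 := by
    apply Real.sSup_le
    · rintro y ⟨t, _, rfl⟩; exact hvb t
    · exact zero_le_one
  calc ∑ i ∈ Finset.range n, |qmoll P h (u (i+1)) - qmoll P h (u i)|
      = ∑ i ∈ Finset.range n, ε i * (qmoll P h (u (i+1)) - qmoll P h (u i)) :=
        (Finset.sum_congr rfl fun i _ => (hεΔ i)).symm
    _ = ∫ t in a..b, p t * deriv v t := key.symm
    _ ≤ |∫ t in a..b, p t * deriv v t| := le_abs_self _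
    _ ≤ K * sSup ((fun t => |v t|) '' Icc a b) := hbound v hvC1
    _ ≤ K * 1 := mul_le_mul_of_nonneg_left hsup hK
    _ = K := mul_one K

lemma qmoll_sub_bound {g : ℝ → ℝ} (hg : Integrable g) {h : ℝ} (hh : 0 < h) (x : ℝ)
    {C : ℝ} (hC : 0 < C) (hC2 : ∀ s, |eta s| ≤ C) :
    ‖qmoll g h x - g x‖ ≤ 2 * C * ⨍ y in closedBall x h, ‖g y - g x‖ := by
  have hmb : ∀ t, |moll h x t| ≤ C * h⁻¹ := by
    intro t
    rw [moll, abs_mul, abs_of_pos (inv_pos.2 hh)]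
    exact mul_le_mul_of_nonneg_right (hC2 _) (inv_pos.2 hh).le
  have e0 : qmoll g h x - g x = ∫ t, (g t - g x) * moll h x t := by
    rw [qmoll]
    have e1 : g x = ∫ t, g x * moll h x t := by
      rw [MeasureTheory.integral_const_mul, moll_integral hh, mul_one]
    conv_lhs => rw [e1]
    rw [← MeasureTheory.integral_sub (integrable_mul_moll hg hh x)
      ((moll_integrable hh).const_mul (g x))]
    congr 1; funext t; ring
  have hsupp : ∀ t, t ∉ closedBall x h → |(g t - g x) * moll h x t| = 0 := by
    intro t ht
    rw [moll_support hh t, mul_zero, abs_zero]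
    intro ⟨h1, h2⟩
    apply ht
    rw [mem_closedBall, Real.dist_eq, abs_le]
    constructor <;> linarith
  have hint1 : Integrable (fun t => (g t - g x) * moll h x t) := by
    have := (integrable_mul_moll hg hh x).sub
      (((moll_integrable (x := x) hh)).const_mul (g x))
    exact this.congr (Filter.Eventually.of_forall fun t => by simp only [Pi.sub_apply]; ring)
  calc ‖qmoll g h x - g x‖ = |∫ t, (g t - g x) * moll h x t| := by rw [e0, Real.norm_eq_abs]
    _ ≤ ∫ t, |(g t - g x) * moll h x t| := by
        have := MeasureTheory.norm_integral_le_integral_norm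
          (f := fun t => (g t - g x) * moll h x t) (μ := volume)
        simp only [Real.norm_eq_abs] at this
        exact this
    _ = ∫ t in closedBall x h, |(g t - g x) * moll h x t| :=
        (MeasureTheory.setIntegral_eq_integral_of_forall_compl_eq_zero hsupp).symm
    _ ≤ ∫ t in closedBall x h, ‖g t - g x‖ * (C * h⁻¹) := by
        apply MeasureTheory.setIntegral_mono_on hint1.abs.integrableOn
        · refine (((hg.integrableOn.sub ?_).norm).mul_const _)
          exact integrableOn_const measure_closedBall_lt_top.ne
        · exact measurableSet_closedBall
        · intro t _
          rw [abs_mul, Real.norm_eq_abs]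
          exact mul_le_mul_of_nonneg_left (hmb t) (abs_nonneg _)
    _ = (∫ t in closedBall x h, ‖g t - g x‖) * (C * h⁻¹) := by
        rw [MeasureTheory.integral_mul_const]
    _ = 2 * C * ⨍ y in closedBall x h, ‖g y - g x‖ := by
        rw [MeasureTheory.setAverage_eq, Real.volume_real_closedBall hh.le, smul_eq_mul]
        field_simp

lemma qmoll_ae_tendsto {g : ℝ → ℝ} (hg : Integrable g) :
    ∀ᵐ x ∂(volume : Measure ℝ),
      Tendsto (fun n : ℕ => qmoll g (1 / (n + 1)) x) atTop (𝓝 (g x)) := by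
  obtain ⟨C, hC, hC2⟩ := eta_bound
  filter_upwards [IsUnifLocDoublingMeasure.ae_tendsto_average_norm_sub (volume : Measure ℝ)
    hg.locallyIntegrable 1] with x hx
  set δ : ℕ → ℝ := fun n => 1 / (n + 1) with hδdef
  have hδpos : ∀ n, 0 < δ n := fun n => by positivity
  have hδ : Tendsto δ atTop (𝓝[>] 0) := by
    apply tendsto_nhdsWithin_of_tendsto_nhds_of_eventually_within
    · exact tendsto_one_div_add_atTop_nhds_zero_nat
    · exact Filter.Eventually.of_forall fun n => hδpos n
  have havg : Tendsto (fun j => ⨍ y in closedBall x (δ j), ‖g y - g x‖) atTop (𝓝 0) :=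
    hx (fun _ => x) δ hδ (Filter.Eventually.of_forall fun j => by
      rw [mem_closedBall, dist_self, one_mul]; exact (hδpos j).le)
  have key : ∀ n, ‖qmoll g (δ n) x - g x‖ ≤ 2 * C * ⨍ y in closedBall x (δ n), ‖g y - g x‖ :=
    fun n => qmoll_sub_bound hg (hδpos n) x hC hC2
  have h2 : Tendsto (fun n => 2 * C * ⨍ y in closedBall x (δ n), ‖g y - g x‖) atTop (𝓝 0) := by
    have := havg.const_mul (2 * C)
    rwa [mul_zero] at this
  have h3 : Tendsto (fun n => qmoll g (δ n) x - g x) atTop (𝓝 0) :=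
    squeeze_zero_norm key h2
  have h4 := h3.add_const (g x)
  simp only [sub_add_cancel, zero_add] at h4
  exact h4.congr (fun k => by rw [hδdef])

lemma bv_extend {f : ℝ → ℝ} {s : Set ℝ} {a b : ℝ} (hab : a < b) (hs : s ⊆ Ioo a b)
    (hdense : ∀ x y, a ≤ x → x < y → y ≤ b → (s ∩ Ioo x y).Nonempty)
    {K : ℝ} (hvar : eVariationOn f s ≤ ENNReal.ofReal K) :
    ∃ g : ℝ → ℝ, eVariationOn g (Icc a b) ≤ ENNReal.ofReal K ∧ EqOn g f s := by
  classical
  -- basic setup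
  have hne : s.Nonempty := by
    obtain ⟨d, hd⟩ := hdense a b le_rfl hab le_rfl
    exact ⟨d, hd.1⟩
  obtain ⟨c, hc⟩ := hne
  have hbv : BoundedVariationOn f s := ne_top_of_le_ne_top ENNReal.ofReal_ne_top hvar
  have hlbv : LocallyBoundedVariationOn f s := hbv.locallyBoundedVariationOn
  set V : ℝ := (eVariationOn f s).toReal with hV
  set F : ℝ → ℝ := variationOnFromTo f s c with hF
  set G : ℝ → ℝ := fun x => F x - f x with hG
  have hFmono : MonotoneOn F s := variationOnFromTo.monotoneOn hlbv hc
  have hGmono : MonotoneOn G s := by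
    have := variationOnFromTo.sub_self_monotoneOn hlbv hc
    intro x hx y hy hxy
    exact this hx hy hxy
  -- bounds
  have hFbd : ∀ x ∈ s, |F x| ≤ V := by
    intro x hx
    rcases le_total c x with h1 | h1
    · rw [hF, variationOnFromTo.eq_of_le f s h1, abs_of_nonneg ENNReal.toReal_nonneg]
      exact ENNReal.toReal_mono hbv (eVariationOn.mono f inter_subset_left)
    · rw [hF, variationOnFromTo.eq_of_ge f s h1, abs_neg, abs_of_nonneg ENNReal.toReal_nonneg]
      exact ENNReal.toReal_mono hbv (eVariationOn.mono f inter_subset_left)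
  have hfbd : ∀ x ∈ s, |f x| ≤ |f c| + V := by
    intro x hx
    have := hbv.dist_le hx hc
    rw [Real.dist_eq] at this
    calc |f x| = |f c + (f x - f c)| := by ring_nf
      _ ≤ |f c| + |f x - f c| := abs_add_le _ _
      _ ≤ |f c| + V := by linarith
  have hGbd : ∀ x ∈ s, |G x| ≤ 2 * V + |f c| := by
    intro x hx
    rw [hG]
    calc |F x - f x| ≤ |F x| + |f x| := abs_sub _ _
      _ ≤ 2 * V + |f c| := by
        have := hFbd x hx; have := hfbd x hx; linarith
  set B : ℝ := 2 * V + |f c| with hB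
  have hVB : V ≤ B := by
    have : 0 ≤ V := ENNReal.toReal_nonneg
    have : (0:ℝ) ≤ |f c| := abs_nonneg _
    simp only [hB]; linarith
  have hFB : ∀ x ∈ s, -B ≤ F x ∧ F x ≤ B := fun x hx => abs_le.1 ((hFbd x hx).trans hVB)
  have hGB : ∀ x ∈ s, -B ≤ G x ∧ G x ≤ B := fun x hx => abs_le.1 (hGbd x hx)
  have hFbddB : BddBelow (F '' s) := ⟨-B, by rintro y ⟨z, hz, rfl⟩; exact (hFB z hz).1⟩
  have hFbddA : BddAbove (F '' s) := ⟨B, by rintro y ⟨z, hz, rfl⟩; exact (hFB z hz).2⟩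
  have hGbddB : BddBelow (G '' s) := ⟨-B, by rintro y ⟨z, hz, rfl⟩; exact (hGB z hz).1⟩
  have hGbddA : BddAbove (G '' s) := ⟨B, by rintro y ⟨z, hz, rfl⟩; exact (hGB z hz).2⟩
  -- the extension
  set Fe : ℝ → ℝ := fun x => if x < b then sInf (F '' (s ∩ Ici x)) else sSup (F '' s) with hFe
  set Ge : ℝ → ℝ := fun x => if x < b then sInf (G '' (s ∩ Ici x)) else sSup (G '' s) with hGe
  set g : ℝ → ℝ := fun x => Fe x - Ge x with hg
  -- g = f on s
  have heq : EqOn g f s := by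
    intro x hx
    have hxb : x < b := (hs hx).2
    have hFex : Fe x = F x := by
      rw [hFe]; dsimp only; rw [if_pos hxb]
      apply IsLeast.csInf_eq
      constructor
      · exact ⟨x, ⟨hx, mem_Ici.2 le_rfl⟩, rfl⟩
      · rintro y ⟨z, ⟨hz, hxz⟩, rfl⟩
        exact hFmono hx hz hxz
    have hGex : Ge x = G x := by
      rw [hGe]; dsimp only; rw [if_pos hxb]
      apply IsLeast.csInf_eq
      constructor
      · exact ⟨x, ⟨hx, mem_Ici.2 le_rfl⟩, rfl⟩
      · rintro y ⟨z, ⟨hz, hxz⟩, rfl⟩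
        exact hGmono hx hz hxz
    rw [hg]; dsimp only; rw [hFex, hGex, hG]; ring
  -- the approximation property
  have approx : ∀ x ∈ Icc a b, ∀ ε > (0:ℝ), ∀ δ > (0:ℝ), ∃ d ∈ s,
      |g x - f d| ≤ 2 * ε ∧ (x < b → x ≤ d ∧ d < x + δ) ∧ (¬ x < b → b - δ < d ∧ d < b) := by
    intro x hx ε hε δ hδ
    by_cases hxb : x < b
    · -- approximation from the right
      have hne1 : (s ∩ Ici x).Nonempty := by
        obtain ⟨d, hd⟩ := hdense x b hx.1 hxb le_rfl
        exact ⟨d, hd.1, hd.2.1.le⟩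
      have hbddF : BddBelow (F '' (s ∩ Ici x)) :=
        hFbddB.mono (image_mono (f := F) inter_subset_left)
      have hbddG : BddBelow (G '' (s ∩ Ici x)) :=
        hGbddB.mono (image_mono (f := G) inter_subset_left)
      have hFex : Fe x = sInf (F '' (s ∩ Ici x)) := by rw [hFe]; dsimp only; rw [if_pos hxb]
      have hGex : Ge x = sInf (G '' (s ∩ Ici x)) := by rw [hGe]; dsimp only; rw [if_pos hxb]
      obtain ⟨y₀, ⟨d₀, hd₀, rfl⟩, hy₀⟩ :=
        exists_lt_of_csInf_lt (hne1.image F) (lt_add_of_pos_right _ hε)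
      obtain ⟨y₁, ⟨d₁, hd₁, rfl⟩, hy₁⟩ :=
        exists_lt_of_csInf_lt (hne1.image G) (lt_add_of_pos_right _ hε)
      set e := min d₀ d₁ with he
      have hes : e ∈ s := by
        rw [he]; rcases le_total d₀ d₁ with h | h
        · rw [min_eq_left h]; exact hd₀.1
        · rw [min_eq_right h]; exact hd₁.1
      have hxe : x ≤ e := le_min hd₀.2 hd₁.2
      rcases eq_or_lt_of_le hxe with hxe' | hxe'
      · -- x ∈ s; take d = x
        have hxs : x ∈ s := hxe' ▸ hes
        refine ⟨x, hxs, ?_, fun _ => ⟨le_rfl, by linarith⟩, fun h => absurd hxb h⟩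
        rw [heq hxs, sub_self, abs_zero]; positivity
      · -- pick d strictly between x and min e (x + δ)
        have hmin : x < min e (x + δ) := lt_min hxe' (by linarith)
        have hminb : min e (x + δ) ≤ b := (min_le_left _ _).trans (hs hes).2.le
        obtain ⟨d, hds, hd1, hd2⟩ := hdense x (min e (x + δ)) hx.1 hmin hminb
        have hdle : d ≤ e := hd2.le.trans (min_le_left _ _) |>.trans (le_refl e)
        have hdlt : d < x + δ := lt_of_lt_of_le hd2 (min_le_right _ _)
        have hxd : x ≤ d := hd1.le
        have hF1 : Fe x ≤ F d := hFex ▸ csInf_le hbddF ⟨d, ⟨hds, hxd⟩, rfl⟩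
        have hF2 : F d ≤ F d₀ := hFmono hds hd₀.1 (hdle.trans (min_le_left _ _))
        have hG1 : Ge x ≤ G d := hGex ▸ csInf_le hbddG ⟨d, ⟨hds, hxd⟩, rfl⟩
        have hG2 : G d ≤ G d₁ := hGmono hds hd₁.1 (hdle.trans (min_le_right _ _))
        have hFee : F d < Fe x + ε := by rw [hFex]; exact lt_of_le_of_lt hF2 hy₀
        have hGee : G d < Ge x + ε := by rw [hGex]; exact lt_of_le_of_lt hG2 hy₁
        refine ⟨d, hds, ?_, fun _ => ⟨hxd, hdlt⟩, fun h => absurd hxb h⟩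
        have hfd : f d = F d - G d := by rw [hG]; ring
        rw [hg]; dsimp only
        rw [hfd, abs_le]
        constructor <;> linarith
    · -- x = b : approximation from the left
      have hFex : Fe x = sSup (F '' s) := by rw [hFe]; dsimp only; rw [if_neg hxb]
      have hGex : Ge x = sSup (G '' s) := by rw [hGe]; dsimp only; rw [if_neg hxb]
      have hnes : s.Nonempty := ⟨c, hc⟩
      obtain ⟨y₀, ⟨d₀, hd₀, rfl⟩, hy₀⟩ :=
        exists_lt_of_lt_csSup (hnes.image F) (sub_lt_self (sSup (F '' s)) hε)
      obtain ⟨y₁, ⟨d₁, hd₁, rfl⟩, hy₁⟩ :=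
        exists_lt_of_lt_csSup (hnes.image G) (sub_lt_self (sSup (G '' s)) hε)
      set e := max d₀ d₁ with he
      have hes : e ∈ s := by
        rw [he]; rcases le_total d₀ d₁ with h | h
        · rw [max_eq_right h]; exact hd₁
        · rw [max_eq_left h]; exact hd₀
      have hmax : max e (b - δ) < b := max_lt (hs hes).2 (by linarith)
      have hamax : a ≤ max e (b - δ) := (hs hes).1.le.trans (le_max_left _ _)
      obtain ⟨d, hds, hd1, hd2⟩ := hdense (max e (b - δ)) b hamax hmax le_rfl
      have hde : e ≤ d := (le_max_left _ _).trans hd1.le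
      have hdb : b - δ < d := lt_of_le_of_lt (le_max_right _ _) hd1
      have hF1 : F d ≤ Fe x := by
        rw [hFex]; exact le_csSup hFbddA ⟨d, hds, rfl⟩
      have hF2 : Fe x - ε < F d := by
        rw [hFex]; exact lt_of_lt_of_le hy₀ (hFmono hd₀ hds ((le_max_left d₀ d₁).trans ((le_max_left e (b - δ)).trans hd1.le)))
      have hG1 : G d ≤ Ge x := by
        rw [hGex]; exact le_csSup hGbddA ⟨d, hds, rfl⟩
      have hG2 : Ge x - ε < G d := by
        rw [hGex]; exact lt_of_lt_of_le hy₁ (hGmono hd₁ hds ((le_max_right d₀ d₁).trans ((le_max_left e (b - δ)).trans hd1.le)))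
      refine ⟨d, hds, ?_, fun h => absurd h hxb, fun _ => ⟨hdb, hd2⟩⟩
      have hfd : f d = F d - G d := by rw [hG]; ring
      rw [hg]; dsimp only
      rw [hfd, abs_le]
      constructor <;> linarith
  -- the variation bound
  have hvarg : eVariationOn g (Icc a b) ≤ ENNReal.ofReal K := by
    apply iSup_le
    rintro ⟨n, u, hu, us⟩
    dsimp only
    apply ENNReal.le_of_forall_pos_le_add
    intro η hη _
    -- choose ε'
    set ε' : ℝ := (η : ℝ) / (4 * n + 4) with hε'def
    have hε' : 0 < ε' := by
      apply div_pos (by exact_mod_cast hη) (by positivity)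
    -- gap functions for this partition
    set P : Finset ℝ := (Finset.range (n + 1)).image u with hPdef
    set γR : ℝ → ℝ := fun x =>
      if hx : (P.filter (fun y => x < y)).Nonempty
      then ((P.filter (fun y => x < y)).min' hx - x) / 2 else 1 with hγR
    have hγRpos : ∀ x, 0 < γR x := by
      intro x
      rw [hγR]; dsimp only
      split
      · rename_i hx
        have := (P.filter (fun y => x < y)).min'_mem hx
        rw [Finset.mem_filter] at this
        linarith [this.2]
      · exact one_pos
    have hγRle : ∀ x j, j ≤ n → x < u j → γR x ≤ (u j - x) / 2 := by
      intro x j hj hxj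
      have hmem : u j ∈ P.filter (fun y => x < y) := by
        rw [Finset.mem_filter]
        exact ⟨Finset.mem_image_of_mem u (Finset.mem_range.2 (Nat.lt_succ_of_le hj)), hxj⟩
      rw [hγR]; dsimp only
      rw [dif_pos ⟨u j, hmem⟩]
      have := Finset.min'_le _ _ hmem
      linarith
    set γL : ℝ := if hx : (P.filter (fun y => y < b)).Nonempty
      then (b - (P.filter (fun y => y < b)).max' hx) / 2 else 1 with hγL
    have hγLpos : 0 < γL := by
      rw [hγL]
      split
      · rename_i hx
        have := (P.filter (fun y => y < b)).max'_mem hx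
        rw [Finset.mem_filter] at this
        linarith [this.2]
      · exact one_pos
    have hγLle : ∀ j, j ≤ n → u j < b → γL ≤ (b - u j) / 2 := by
      intro j hj hjb
      have hmem : u j ∈ P.filter (fun y => y < b) := by
        rw [Finset.mem_filter]
        exact ⟨Finset.mem_image_of_mem u (Finset.mem_range.2 (Nat.lt_succ_of_le hj)), hjb⟩
      rw [hγL]
      rw [dif_pos ⟨u j, hmem⟩]
      have := Finset.le_max' _ _ hmem
      linarith
    set δx : ℝ → ℝ := fun x => if x < b then γR x else γL with hδx
    have hδxpos : ∀ x, 0 < δx x := by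
      intro x; rw [hδx]; dsimp only; split
      · exact hγRpos x
      · exact hγLpos
    -- the choice function
    have hchoice : ∀ x : ℝ, ∃ d : ℝ, x ∈ Icc a b → (d ∈ s ∧ |g x - f d| ≤ 2 * ε' ∧
        (x < b → x ≤ d ∧ d < x + δx x) ∧ (¬ x < b → b - δx x < d ∧ d < b)) := by
      intro x
      by_cases hx : x ∈ Icc a b
      · obtain ⟨d, hds, h1, h2, h3⟩ := approx x hx ε' hε' (δx x) (hδxpos x)
        exact ⟨d, fun _ => ⟨hds, h1, h2, h3⟩⟩
      · exact ⟨0, fun h => absurd h hx⟩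
    choose cf hcf using hchoice
    set d : ℕ → ℝ := fun i => cf (u i) with hd
    have hds : ∀ i, d i ∈ s := fun i => (hcf (u i) (us i)).1
    have happ : ∀ i, |g (u i) - f (d i)| ≤ 2 * ε' := fun i => (hcf (u i) (us i)).2.1
    -- monotonicity of d on [0, n]
    have hdmono : MonotoneOn d (Icc (0:ℕ) n) := by
      intro i hi j hj hij
      have huij : u i ≤ u j := hu hij
      rcases eq_or_lt_of_le huij with hequ | hltu
      · rw [hd]; dsimp only; rw [hequ]
      · have huib : u i < b := lt_of_lt_of_le hltu (us j).2
        obtain ⟨hdi1, hdi2⟩ := (hcf (u i) (us i)).2.2.1 huib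
        have hδui : δx (u i) = γR (u i) := by rw [hδx]; dsimp only; rw [if_pos huib]
        have hγle : γR (u i) ≤ (u j - u i) / 2 := hγRle (u i) j hj.2 hltu
        by_cases hujb : u j < b
        · obtain ⟨hdj1, _⟩ := (hcf (u j) (us j)).2.2.1 hujb
          have : d i < u j := by
            rw [hδui] at hdi2; linarith
          exact (this.trans_le hdj1).le
        · obtain ⟨hdj1, _⟩ := (hcf (u j) (us j)).2.2.2 hujb
          have hujeqb : u j = b := le_antisymm (us j).2 (not_lt.1 hujb)
          have hδuj : δx (u j) = γL := by rw [hδx]; dsimp only; rw [if_neg hujb]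
          have hγLui : γL ≤ (b - u i) / 2 := hγLle i hi.2 huib
          have h1 : γR (u i) ≤ (b - u i) / 2 := by
            rw [hujeqb] at hγle; exact hγle
          rw [hδuj] at hdj1
          rw [hδui] at hdi2
          have : d i < b - γL := by linarith
          linarith [hdj1]
    -- the sum bound
    have hsum : ∑ i ∈ Finset.range n, edist (g (u (i+1))) (g (u i))
        ≤ ∑ i ∈ Finset.range n, edist (f (d (i+1))) (f (d i))
          + (n : ℝ≥0∞) * ENNReal.ofReal (4 * ε') := by
      calc ∑ i ∈ Finset.range n, edist (g (u (i+1))) (g (u i))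
          ≤ ∑ i ∈ Finset.range n,
            (edist (f (d (i+1))) (f (d i)) + ENNReal.ofReal (4 * ε')) := by
            apply Finset.sum_le_sum
            intro i _
            rw [edist_dist, Real.dist_eq, edist_dist, Real.dist_eq]
            have h1 := happ (i+1)
            have h2 := happ i
            have key : |g (u (i+1)) - g (u i)| ≤ |f (d (i+1)) - f (d i)| + 4 * ε' := by
              have e1 : g (u (i+1)) - g (u i)
                  = (f (d (i+1)) - f (d i)) + (g (u (i+1)) - f (d (i+1)))
                    - (g (u i) - f (d i)) := by ring
              rw [e1]
              calc |f (d (i+1)) - f (d i) + (g (u (i+1)) - f (d (i+1)))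
                    - (g (u i) - f (d i))|
                  ≤ |f (d (i+1)) - f (d i) + (g (u (i+1)) - f (d (i+1)))|
                    + |g (u i) - f (d i)| := abs_sub _ _
                _ ≤ |f (d (i+1)) - f (d i)| + |g (u (i+1)) - f (d (i+1))|
                    + |g (u i) - f (d i)| := by
                    have := abs_add_le (f (d (i+1)) - f (d i)) (g (u (i+1)) - f (d (i+1)))
                    linarith
                _ ≤ |f (d (i+1)) - f (d i)| + 4 * ε' := by linarith
            calc ENNReal.ofReal |g (u (i+1)) - g (u i)|
                ≤ ENNReal.ofReal (|f (d (i+1)) - f (d i)| + 4 * ε') :=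
                  ENNReal.ofReal_le_ofReal key
              _ = ENNReal.ofReal |f (d (i+1)) - f (d i)| + ENNReal.ofReal (4 * ε') :=
                  ENNReal.ofReal_add (abs_nonneg _) (by positivity)
        _ = ∑ i ∈ Finset.range n, edist (f (d (i+1))) (f (d i))
            + (n : ℝ≥0∞) * ENNReal.ofReal (4 * ε') := by
            rw [Finset.sum_add_distrib, Finset.sum_const, Finset.card_range, nsmul_eq_mul]
    have hsum2 : ∑ i ∈ Finset.range n, edist (f (d (i+1))) (f (d i)) ≤ eVariationOn f s := by
      rw [Finset.range_eq_Ico]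
      exact eVariationOn.sum_le_of_monotoneOn_Icc (f := f) hdmono (fun i _ => hds i)
    have hfin : (n : ℝ≥0∞) * ENNReal.ofReal (4 * ε') ≤ (η : ℝ≥0∞) := by
      rw [← ENNReal.ofReal_natCast n, ← ENNReal.ofReal_mul (by positivity)]
      rw [← ENNReal.ofReal_coe_nnreal]
      apply ENNReal.ofReal_le_ofReal
      rw [hε'def]
      rw [div_eq_inv_mul, ← mul_assoc, ← mul_assoc]
      have hn4 : (n : ℝ) * 4 * (4 * (n:ℝ) + 4)⁻¹ ≤ 1 := by
        rw [mul_inv_le_iff₀ (by positivity), one_mul]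
        linarith
      nlinarith [NNReal.coe_nonneg η, hn4]
    calc ∑ i ∈ Finset.range n, edist (g (u (i+1))) (g (u i))
        ≤ ∑ i ∈ Finset.range n, edist (f (d (i+1))) (f (d i))
          + (n : ℝ≥0∞) * ENNReal.ofReal (4 * ε') := hsum
      _ ≤ ENNReal.ofReal K + (η : ℝ≥0∞) := add_le_add (hsum2.trans hvar) hfin
  exact ⟨g, hvarg, heq⟩


/-- If `p ∈ L¹(a,b)` satisfies `|∫_a^b p v′| ≤ K ⬝ sup_{[a,b]} |v|` for every
`C¹` function `v`, then `p` coincides a.e. on `(a,b)` with a function of total variation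
at most `K` on `[a,b]`. -/
theorem bv_representative_from_duality_bound (a b : ℝ) (hab : a < b)
    (K : ℝ) (hK : 0 ≤ K) (p : ℝ → ℝ)
    (hp : IntegrableOn p (Ioo a b) (volume : Measure ℝ))
    (hbound : ∀ v : ℝ → ℝ, ContDiff ℝ 1 v →
      |∫ t in a..b, p t * deriv v t| ≤ K * sSup ((fun t => |v t|) '' Icc a b)) :
    ∃ q : ℝ → ℝ, eVariationOn q (Icc a b) ≤ ENNReal.ofReal K ∧
      ∀ᵐ t ∂((volume : Measure ℝ).restrict (Ioo a b)), q t = p t := by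
  classical
  set P : ℝ → ℝ := (Ioo a b).indicator p with hPdef
  have hPint : Integrable P := hp.integrable_indicator measurableSet_Ioo
  have hae := qmoll_ae_tendsto hPint
  set D : Set ℝ := {x | x ∈ Ioo a b ∧
    Tendsto (fun n : ℕ => qmoll P (1 / (n + 1)) x) atTop (𝓝 (P x))} with hDdef
  have hD : ∀ᵐ x ∂((volume : Measure ℝ).restrict (Ioo a b)), x ∈ D := by
    filter_upwards [ae_restrict_of_ae hae, ae_restrict_mem measurableSet_Ioo] with x h1 h2
    exact ⟨h2, h1⟩
  have hDsub : D ⊆ Ioo a b := fun x hx => hx.1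
  have hdense : ∀ x y, a ≤ x → x < y → y ≤ b → (D ∩ Ioo x y).Nonempty := by
    intro x y hax hxy hyb
    by_contra hemp
    rw [Set.not_nonempty_iff_eq_empty] at hemp
    have hsub : Ioo x y ⊆ {z | z ∉ D} := by
      intro z hz hzD
      have hzm : z ∈ D ∩ Ioo x y := ⟨hzD, hz⟩
      rw [hemp] at hzm
      exact hzm
    have h0 : (volume : Measure ℝ).restrict (Ioo a b) {z | z ∉ D} = 0 := ae_iff.mp hD
    have h1 : (volume : Measure ℝ).restrict (Ioo a b) (Ioo x y) = 0 :=
      le_antisymm (h0 ▸ measure_mono hsub) (zero_le)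
    rw [Measure.restrict_apply measurableSet_Ioo,
      Set.inter_eq_left.2 (Ioo_subset_Ioo hax hyb), Real.volume_Ioo] at h1
    exact absurd h1 (by simp [ENNReal.ofReal_eq_zero]; linarith)
  have hvarD : eVariationOn P D ≤ ENNReal.ofReal K := by
    apply iSup_le
    rintro ⟨n, u, hu, uD⟩
    dsimp only
    have hterm : Tendsto (fun k : ℕ => ∑ i ∈ Finset.range n,
        |qmoll P (1 / (k + 1)) (u (i+1)) - qmoll P (1 / (k + 1)) (u i)|) atTop
        (𝓝 (∑ i ∈ Finset.range n, |P (u (i+1)) - P (u i)|)) := by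
      apply tendsto_finset_sum
      intro i _
      exact (((uD (i+1)).2).sub ((uD i).2)).abs
    have hreal : ∑ i ∈ Finset.range n, |P (u (i+1)) - P (u i)| ≤ K := by
      apply le_of_tendsto hterm
      apply Filter.Eventually.of_forall
      intro k
      exact sum_bound a b K hab hK p hp hbound (by positivity) n u hu
    calc ∑ i ∈ Finset.range n, edist (P (u (i+1))) (P (u i))
        = ENNReal.ofReal (∑ i ∈ Finset.range n, |P (u (i+1)) - P (u i)|) := by
          rw [ENNReal.ofReal_sum_of_nonneg (fun i _ => abs_nonneg _)]
          apply Finset.sum_congr rfl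
          intro i _
          rw [edist_dist, Real.dist_eq]
      _ ≤ ENNReal.ofReal K := ENNReal.ofReal_le_ofReal hreal
  obtain ⟨g, hgvar, hgeq⟩ := bv_extend hab hDsub hdense hvarD
  refine ⟨g, hgvar, ?_⟩
  filter_upwards [hD, ae_restrict_mem measurableSet_Ioo] with t htD htIoo
  rw [hgeq htD, hPdef, Set.indicator_of_mem htIoo]
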